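/- Assume: consistency for a=2; conditional exchangeability over A in the external data for a=2 with external positivity P(A=2|X=x,S=0)>0; mean transportability to the third population: E[Y²|X=x,S=2]=E[Y²|X=x,S=0] whenever P(X=x,S=2)>0 and P(X=x,S=0)>0; and positivity P(S=0|X=x)>0 for every x with P(X=x,S=2)>0. Then E[Y² | S=2] = γ*_{0,2} := Σ_x E[Y|X=x,S=0,A=2] · P(X=x | S=2), and combined with the analogous identification of E[Y¹|S=2] by γ*_{1,1}, the effect E[Y¹ − Y² | S=2] equals ψ* := γ*_{1,1} − γ*_{0,2}. -/
import Mathlib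


open Finset
open scoped Classical

noncomputable def pr {Ω : Type*} [Fintype Ω] (P : Ω → ℝ) (E : Ω → Prop) : ℝ :=
  ∑ ω, if E ω then P ω else 0

noncomputable def cexp {Ω : Type*} [Fintype Ω] (P : Ω → ℝ) (Y : Ω → ℝ) (E : Ω → Prop) : ℝ :=
  (∑ ω, if E ω then Y ω * P ω else 0) / pr P E

noncomputable def cpr {Ω : Type*} [Fintype Ω] (P : Ω → ℝ) (E F : Ω → Prop) : ℝ :=
  pr P (fun ω => E ω ∧ F ω) / pr P F

section helpers
variable {Ω : Type*} [Fintype Ω] (P : Ω → ℝ)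

lemma pr_nonneg (hP : ∀ ω, 0 ≤ P ω) (E : Ω → Prop) : 0 ≤ pr P E := by
  apply Finset.sum_nonneg; intro ω _; split <;> simp [hP ω]

lemma pr_congr {E F : Ω → Prop} (h : ∀ ω, E ω ↔ F ω) : pr P E = pr P F := by
  unfold pr; exact Finset.sum_congr rfl fun ω _ => by rw [if_congr (h ω) rfl rfl]

lemma cexp_congr {Y Z : Ω → ℝ} {E : Ω → Prop} (h : ∀ ω, E ω → Y ω = Z ω) :
    cexp P Y E = cexp P Z E := by
  unfold cexp; congr 1
  exact Finset.sum_congr rfl fun ω _ => by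
    by_cases hE : E ω
    · simp [hE, h ω hE]
    · simp [hE]

lemma event_zero (hP : ∀ ω, 0 ≤ P ω) {E : Ω → Prop} (h : pr P E = 0) :
    ∀ ω, E ω → P ω = 0 := by
  intro ω hE
  have := (Finset.sum_eq_zero_iff_of_nonneg (fun ω _ => by
    split <;> simp [hP ω])).mp h ω (Finset.mem_univ ω)
  simpa [hE] using this

lemma pos_of_cpr_pos (hP : ∀ ω, 0 ≤ P ω) {E F : Ω → Prop} (h : 0 < cpr P E F) :
    0 < pr P (fun ω => E ω ∧ F ω) := by
  rcases lt_or_eq_of_le (pr_nonneg P hP (fun ω => E ω ∧ F ω)) with h' | h'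
  · exact h'
  · exfalso; unfold cpr at h; rw [← h'] at h; simp at h

lemma cexp_sub (Y Z : Ω → ℝ) (E : Ω → Prop) :
    cexp P (fun ω => Y ω - Z ω) E = cexp P Y E - cexp P Z E := by
  unfold cexp
  rw [← sub_div]
  congr 1
  rw [← Finset.sum_sub_distrib]
  refine Finset.sum_congr rfl fun ω _ => ?_
  by_cases hE : E ω <;> simp [hE, sub_mul]

lemma total_exp (hP : ∀ ω, 0 ≤ P ω) {𝓧 : Type*} [Fintype 𝓧]
    (X : Ω → 𝓧) (E : Ω → Prop) (Z : Ω → ℝ) (hE : 0 < pr P E) :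
    cexp P Z E = ∑ x ∈ univ.filter (fun x => 0 < pr P (fun ω => X ω = x ∧ E ω)),
      cexp P Z (fun ω => X ω = x ∧ E ω) * (pr P (fun ω => X ω = x ∧ E ω) / pr P E) := by
  have key : (∑ ω, if E ω then Z ω * P ω else 0)
      = ∑ x, ∑ ω, if X ω = x ∧ E ω then Z ω * P ω else 0 := by
    rw [Finset.sum_comm]
    refine Finset.sum_congr rfl fun ω _ => ?_
    rw [show (∑ x, if X ω = x ∧ E ω then Z ω * P ω else 0)
        = ∑ x, if X ω = x then (if E ω then Z ω * P ω else 0) else 0 by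
      exact Finset.sum_congr rfl fun x _ => by by_cases h1 : X ω = x <;> by_cases h2 : E ω <;> simp [h1, h2]]
    simp [Finset.sum_ite_eq]
  have restrict : (∑ x, ∑ ω, if X ω = x ∧ E ω then Z ω * P ω else 0)
      = ∑ x ∈ univ.filter (fun x => 0 < pr P (fun ω => X ω = x ∧ E ω)),
          ∑ ω, if X ω = x ∧ E ω then Z ω * P ω else 0 := by
    rw [Finset.sum_filter]
    refine Finset.sum_congr rfl fun x _ => ?_
    by_cases hx : 0 < pr P (fun ω => X ω = x ∧ E ω)
    · simp [hx]
    · have h0 : pr P (fun ω => X ω = x ∧ E ω) = 0 :=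
        le_antisymm (not_lt.mp hx) (pr_nonneg P hP _)
      simp only [hx, if_false]
      exact Finset.sum_eq_zero fun ω _ => by
        by_cases hω : X ω = x ∧ E ω
        · rw [if_pos hω, event_zero P hP h0 ω hω, mul_zero]
        · rw [if_neg hω]
  have term : ∀ x ∈ univ.filter (fun x => 0 < pr P (fun ω => X ω = x ∧ E ω)),
      (∑ ω, if X ω = x ∧ E ω then Z ω * P ω else 0)
      = cexp P Z (fun ω => X ω = x ∧ E ω) * pr P (fun ω => X ω = x ∧ E ω) := by
    intro x hx
    rw [Finset.mem_filter] at hx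
    unfold cexp
    rw [div_mul_cancel₀ _ (ne_of_gt hx.2)]; exact Finset.sum_congr rfl fun ω _ => by norm_num
  conv_lhs => rw [cexp]
  rw [key, restrict, Finset.sum_congr rfl term, Finset.sum_div]
  exact Finset.sum_congr rfl fun x _ => mul_div_assoc _ _ _

end helpers

theorem stmt15    {Ω 𝓧 : Type*} [Fintype Ω] [Fintype 𝓧]
    (P : Ω → ℝ) (hP : ∀ ω, 0 ≤ P ω) (hPsum : ∑ ω, P ω = 1)
    (X : Ω → 𝓧) (S : Ω → ℕ) (A : Ω → ℕ) (Y : Ω → ℝ)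
    (Y1 Y2 : Ω → ℝ)
    (hS2 : 0 < pr P (fun ω => S ω = 2))
    (hcons2 : ∀ ω, A ω = 2 → Y2 ω = Y ω)
    (hexchext2 : ∀ x, 0 < pr P (fun ω => X ω = x ∧ S ω = 0) → cexp P Y2 (fun ω => X ω = x ∧ S ω = 0) = cexp P Y2 (fun ω => X ω = x ∧ S ω = 0 ∧ A ω = 2))
    (hposext2 : ∀ x, 0 < pr P (fun ω => X ω = x ∧ S ω = 0) → 0 < cpr P (fun ω => A ω = 2) (fun ω => X ω = x ∧ S ω = 0))
    (htrans2 : ∀ x, 0 < pr P (fun ω => X ω = x ∧ S ω = 2) → 0 < pr P (fun ω => X ω = x ∧ S ω = 0) → cexp P Y2 (fun ω => X ω = x ∧ S ω = 2) = cexp P Y2 (fun ω => X ω = x ∧ S ω = 0))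
    (hpos0x : ∀ x, 0 < pr P (fun ω => X ω = x ∧ S ω = 2) → 0 < cpr P (fun ω => S ω = 0) (fun ω => X ω = x))
    (hcons1 : ∀ ω, A ω = 1 → Y1 ω = Y ω)
    (hexch1 : ∀ x, 0 < pr P (fun ω => X ω = x ∧ S ω = 1) → cexp P Y1 (fun ω => X ω = x ∧ S ω = 1) = cexp P Y1 (fun ω => X ω = x ∧ S ω = 1 ∧ A ω = 1))
    (hpos1 : ∀ x, 0 < pr P (fun ω => X ω = x ∧ S ω = 1) → 0 < cpr P (fun ω => A ω = 1) (fun ω => X ω = x ∧ S ω = 1))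
    (htrans1 : ∀ x, 0 < pr P (fun ω => X ω = x ∧ S ω = 2) → 0 < pr P (fun ω => X ω = x ∧ S ω = 1) → cexp P Y1 (fun ω => X ω = x ∧ S ω = 2) = cexp P Y1 (fun ω => X ω = x ∧ S ω = 1))
    (hpos1x : ∀ x, 0 < pr P (fun ω => X ω = x ∧ S ω = 2) → 0 < cpr P (fun ω => S ω = 1) (fun ω => X ω = x))
    : cexp P Y2 (fun ω => S ω = 2) =
      (∑ x ∈ univ.filter (fun x => 0 < pr P (fun ω => X ω = x ∧ S ω = 2)),
        cexp P Y (fun ω => X ω = x ∧ S ω = 0 ∧ A ω = 2) * (pr P (fun ω => X ω = x ∧ S ω = 2) / pr P (fun ω => S ω = 2))) ∧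
      cexp P (fun ω => Y1 ω - Y2 ω) (fun ω => S ω = 2) =
      (∑ x ∈ univ.filter (fun x => 0 < pr P (fun ω => X ω = x ∧ S ω = 2)),
        cexp P Y (fun ω => X ω = x ∧ S ω = 1 ∧ A ω = 1) * (pr P (fun ω => X ω = x ∧ S ω = 2) / pr P (fun ω => S ω = 2))) -
      (∑ x ∈ univ.filter (fun x => 0 < pr P (fun ω => X ω = x ∧ S ω = 2)),
        cexp P Y (fun ω => X ω = x ∧ S ω = 0 ∧ A ω = 2) * (pr P (fun ω => X ω = x ∧ S ω = 2) / pr P (fun ω => S ω = 2))) := by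
  have key2 : ∀ x, 0 < pr P (fun ω => X ω = x ∧ S ω = 2) →
      cexp P Y2 (fun ω => X ω = x ∧ S ω = 2) = cexp P Y (fun ω => X ω = x ∧ S ω = 0 ∧ A ω = 2) := by
    intro x hx
    have h0 := pos_of_cpr_pos P hP (hpos0x x hx)
    have h0' : 0 < pr P (fun ω => X ω = x ∧ S ω = 0) := by
      rw [pr_congr P (fun ω => (and_comm : (X ω = x ∧ S ω = 0) ↔ _))]; exact h0
    rw [htrans2 x hx h0', hexchext2 x h0']
    exact cexp_congr P fun ω hω => hcons2 ω hω.2.2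
  have key1 : ∀ x, 0 < pr P (fun ω => X ω = x ∧ S ω = 2) →
      cexp P Y1 (fun ω => X ω = x ∧ S ω = 2) = cexp P Y (fun ω => X ω = x ∧ S ω = 1 ∧ A ω = 1) := by
    intro x hx
    have h1 := pos_of_cpr_pos P hP (hpos1x x hx)
    have h1' : 0 < pr P (fun ω => X ω = x ∧ S ω = 1) := by
      rw [pr_congr P (fun ω => (and_comm : (X ω = x ∧ S ω = 1) ↔ _))]; exact h1
    rw [htrans1 x hx h1', hexch1 x h1']
    exact cexp_congr P fun ω hω => hcons1 ω hω.2.2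
  have e2 : cexp P Y2 (fun ω => S ω = 2) =
      ∑ x ∈ univ.filter (fun x => 0 < pr P (fun ω => X ω = x ∧ S ω = 2)),
        cexp P Y (fun ω => X ω = x ∧ S ω = 0 ∧ A ω = 2) * (pr P (fun ω => X ω = x ∧ S ω = 2) / pr P (fun ω => S ω = 2)) := by
    rw [total_exp P hP X (fun ω => S ω = 2) Y2 hS2]
    exact Finset.sum_congr rfl fun x hx => by
      rw [key2 x (Finset.mem_filter.mp hx).2]
  have e1 : cexp P Y1 (fun ω => S ω = 2) =
      ∑ x ∈ univ.filter (fun x => 0 < pr P (fun ω => X ω = x ∧ S ω = 2)),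
        cexp P Y (fun ω => X ω = x ∧ S ω = 1 ∧ A ω = 1) * (pr P (fun ω => X ω = x ∧ S ω = 2) / pr P (fun ω => S ω = 2)) := by
    rw [total_exp P hP X (fun ω => S ω = 2) Y1 hS2]
    exact Finset.sum_congr rfl fun x hx => by
      rw [key1 x (Finset.mem_filter.mp hx).2]
  exact ⟨e2, by rw [cexp_sub, e1, e2]⟩
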